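/- Let Γ be a countable group which is ICC (every nontrivial element has an infinite conjugacy class), let Γ₁ ≤ Γ be a subgroup of finite index, and let μ be a probability measure on the discrete space Γ which is invariant under conjugation by every element of Γ₁, i.e. μ({γgγ⁻¹}) = μ({g}) for all γ ∈ Γ₁ and g ∈ Γ. Then μ is the Dirac mass at the identity: μ({1}) = 1. -/

import Mathlib

open MeasureTheory Set ENNReal

/-- Let `Γ` be a countable ICC group (every nontrivial element has an infinite conjugacy
class), `Γ₁` a finite-index subgroup, and `μ` a probability measure on the discrete space
`Γ` which is invariant under conjugation by every element of `Γ₁`. Then `μ` is the Dirac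
mass at the identity: `μ {1} = 1`. -/
theorem stmt4 {Γ : Type*} [Group Γ] [Countable Γ]
    [MeasurableSpace Γ] [MeasurableSingletonClass Γ]
    (hICC : ∀ g : Γ, g ≠ 1 → {h : Γ | ∃ x : Γ, x * g * x⁻¹ = h}.Infinite)
    (Γ₁ : Subgroup Γ) [Γ₁.FiniteIndex]
    (μ : MeasureTheory.Measure Γ) [MeasureTheory.IsProbabilityMeasure μ]
    (hinv : ∀ γ ∈ Γ₁, ∀ g : Γ, μ {γ * g * γ⁻¹} = μ {g}) :
    μ {1} = 1 := by
  by_contra h1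
  -- there is some g ≠ 1 with positive mass
  have hcompl : μ {(1 : Γ)}ᶜ ≠ 0 := by
    intro h0
    apply h1
    have := measure_add_measure_compl (μ := μ) (s := {(1 : Γ)}) (measurableSet_singleton 1)
    rw [h0, add_zero] at this
    simpa using this
  obtain ⟨g, hg1, hgpos⟩ : ∃ g : Γ, g ≠ 1 ∧ μ {g} ≠ 0 := by
    by_contra hc
    push_neg at hc
    apply hcompl
    have : ({(1 : Γ)}ᶜ : Set Γ) = ⋃ x ∈ ({(1:Γ)}ᶜ : Set Γ), {x} := by
      ext x; simp
    rw [this]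
    refine (measure_biUnion_null_iff (Set.to_countable _)).2 fun x hx => ?_
    exact hc x (by simpa using hx)
  -- the Γ₁-orbit of g
  set O : Set Γ := {h : Γ | ∃ γ ∈ Γ₁, γ * g * γ⁻¹ = h} with hO
  have hOmeas : ∀ y ∈ O, μ {y} = μ {g} := by
    rintro y ⟨γ, hγ, rfl⟩
    exact hinv γ hγ g
  -- O is infinite
  have hOinf : O.Infinite := by
    intro hOfin
    have hquot : Finite (Γ ⧸ Γ₁) := Γ₁.finite_quotient_of_finiteIndex
    have hsub : {h : Γ | ∃ x : Γ, x * g * x⁻¹ = h} ⊆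
        (fun p : (Γ ⧸ Γ₁) × Γ => p.1.out * p.2 * p.1.out⁻¹) '' (Set.univ ×ˢ O) := by
      rintro y ⟨x, rfl⟩
      set q : Γ ⧸ Γ₁ := QuotientGroup.mk x with hq
      have hmem : q.out⁻¹ * x ∈ Γ₁ := by
        rw [← QuotientGroup.eq]
        simp [hq, QuotientGroup.out_eq']
      refine ⟨(q, (q.out⁻¹ * x) * g * (q.out⁻¹ * x)⁻¹), ⟨trivial, ⟨_, hmem, rfl⟩⟩, ?_⟩
      simp only
      group
    exact hICC g hg1 ((((Set.finite_univ (α := Γ ⧸ Γ₁)).prod hOfin).image _).subset hsub)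
  -- contradiction: infinitely many points of equal positive mass
  have hle : ∀ n : ℕ, (n : ℝ≥0∞) * μ {g} ≤ 1 := by
    intro n
    obtain ⟨S, hSO, hScard⟩ := hOinf.exists_subset_card_eq n
    calc (n : ℝ≥0∞) * μ {g} = ∑ y ∈ S, μ {y} := by
          rw [Finset.sum_congr rfl fun y hy => hOmeas y (hSO hy)]
          simp [hScard, mul_comm]
      _ = μ (⋃ y ∈ S, {y}) := (measure_biUnion_finset
            (fun a _ b _ hab => by simp [Set.disjoint_singleton, hab])
            (fun _ _ => measurableSet_singleton _)).symm
      _ ≤ 1 := prob_le_one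
  have : μ {g} = 0 := by
    by_contra hc
    rcases eq_or_ne (μ {g}) ⊤ with htop | htop
    · have := hle 2
      rw [htop] at this
      simp [ENNReal.mul_top] at this
    · obtain ⟨n, hn⟩ := ENNReal.exists_nat_gt (ENNReal.div_lt_top ENNReal.one_ne_top hc).ne
      have h2 : (1 : ℝ≥0∞) < n * μ {g} := by
        calc (1 : ℝ≥0∞) = 1 / μ {g} * μ {g} := by
              rw [ENNReal.div_mul_cancel hc htop]
          _ < n * μ {g} := by
              exact ENNReal.mul_lt_mul_iff_left hc htop |>.2 hn
      exact absurd (hle n) (not_le.2 h2)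
  exact hgpos this
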